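/- Let G be a linearly ordered abelian group, H ⊆ H' convex subgroups of G, and m ≥ 1 an integer. Then H + mH' = (H + mG) ∩ H'. -/

import Mathlib

/-- `mK = {m • k : k ∈ K}` as a subgroup. -/
def smulSub {G : Type*} [AddCommGroup G] (m : ℕ) (K : AddSubgroup G) : AddSubgroup G :=
  AddSubgroup.map (m • AddMonoidHom.id G) K

/-- A subgroup `H` of a linearly ordered abelian group is convex if
`0 ≤ g ≤ h` and `h ∈ H` imply `g ∈ H`. -/
def IsConvexSubgroup {G : Type*} [AddCommGroup G] [LinearOrder G] [IsOrderedAddMonoid G] (H : AddSubgroup G) : Prop :=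
  ∀ g h : G, 0 ≤ g → g ≤ h → h ∈ H → g ∈ H

lemma mem_smulSub {G : Type*} [AddCommGroup G] {m : ℕ} {K : AddSubgroup G} {x : G} :
    x ∈ smulSub m K ↔ ∃ k ∈ K, m • k = x := by
  simp [smulSub, AddSubgroup.mem_map]

lemma convex_of_nsmul_mem {G : Type*} [AddCommGroup G] [LinearOrder G] [IsOrderedAddMonoid G] {H' : AddSubgroup G}
    (hH' : IsConvexSubgroup H') {m : ℕ} (hm : 1 ≤ m) {g : G}
    (h : m • g ∈ H') : g ∈ H' := by
  rcases le_total 0 g with hg | hg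
  · exact hH' g (m • g) hg (by simpa using nsmul_le_nsmul_left hg hm) h
  · have : m • (-g) ∈ H' := by simpa [neg_nsmul] using H'.neg_mem h
    have hng : -g ∈ H' :=
      hH' (-g) (m • (-g)) (neg_nonneg.2 hg)
        (by simpa using nsmul_le_nsmul_left (neg_nonneg.2 hg) hm) this
    simpa using H'.neg_mem hng

/-- For convex subgroups `H ⊆ H'` of a linearly ordered abelian group and `m ≥ 1`,
`H + mH' = (H + mG) ⊓ H'`. -/
theorem sup_smul_eq_sup_top_inf {G : Type*} [AddCommGroup G] [LinearOrder G] [IsOrderedAddMonoid G]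
    (H H' : AddSubgroup G) (hH : IsConvexSubgroup H) (hH' : IsConvexSubgroup H')
    (hle : H ≤ H') (m : ℕ) (hm : 1 ≤ m) :
    H ⊔ smulSub m H' = (H ⊔ smulSub m ⊤) ⊓ H' := by
  apply le_antisymm
  · refine sup_le (le_inf (le_sup_left) hle) (le_inf ?_ ?_)
    · refine le_trans ?_ le_sup_right
      intro x hx
      rcases mem_smulSub.1 hx with ⟨k, _, rfl⟩
      exact mem_smulSub.2 ⟨k, trivial, rfl⟩
    · intro x hx
      rcases mem_smulSub.1 hx with ⟨k, hk, rfl⟩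
      exact H'.nsmul_mem hk m
  · rintro x ⟨hx1, hx2⟩
    rcases (AddSubgroup.mem_sup).1 hx1 with ⟨h, hh, y, hy, rfl⟩
    rcases mem_smulSub.1 hy with ⟨g, -, rfl⟩
    have hmg : m • g ∈ H' := by
      have := H'.sub_mem hx2 (hle hh)
      simpa using this
    have hg : g ∈ H' := convex_of_nsmul_mem hH' hm hmg
    exact AddSubgroup.mem_sup.2 ⟨h, hh, m • g, mem_smulSub.2 ⟨g, hg, rfl⟩, rfl⟩
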